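/- Let $A = \mathbf{k}[t, t^{-1}] \oplus \mathbf{k}[s, s^{-1}]$ with binary operation $\diamond$ given by $t^i \diamond t^j = j t^{i+j-1}$, $t^i \diamond s^j = (2i+j-1)s^{i+j-1}$, $s^j \diamond t^i = i s^{i+j-1}$, $s^i \diamond s^j = 0$ for all $i, j \in \mathbb{Z}$. Then $(A, \diamond)$ is a pre-Lie algebra, i.e., $(a \diamond b) \diamond c - a \diamond (b \diamond c) = (b \diamond a) \diamond c - b \diamond (a \diamond c)$ for all $a, b, c \in A$. -/

import Mathlib

/-- On `A = k[t,t⁻¹] ⊕ k[s,s⁻¹]` (modeled as the free `k`-module on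
`(false, i) ↔ tⁱ` and `(true, i) ↔ sⁱ`), the operation
`tⁱ⋄tʲ = j t^{i+j-1}`, `tⁱ⋄sʲ = (2i+j-1)s^{i+j-1}`, `sʲ⋄tⁱ = i s^{i+j-1}`, `sⁱ⋄sʲ = 0`
defines a pre-Lie algebra. -/
theorem stmt2 {k : Type*} [Field k] [CharZero k]
    (dia : ((Bool × ℤ) →₀ k) →ₗ[k] ((Bool × ℤ) →₀ k) →ₗ[k] ((Bool × ℤ) →₀ k))
    (htt : ∀ i j : ℤ, dia (Finsupp.single (false, i) 1) (Finsupp.single (false, j) 1) =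
      j • Finsupp.single (false, i + j - 1) (1 : k))
    (hts : ∀ i j : ℤ, dia (Finsupp.single (false, i) 1) (Finsupp.single (true, j) 1) =
      (2 * i + j - 1) • Finsupp.single (true, i + j - 1) (1 : k))
    (hst : ∀ i j : ℤ, dia (Finsupp.single (true, j) 1) (Finsupp.single (false, i) 1) =
      i • Finsupp.single (true, i + j - 1) (1 : k))
    (hss : ∀ i j : ℤ, dia (Finsupp.single (true, i) 1) (Finsupp.single (true, j) 1) = 0) :
    ∀ a b c, dia (dia a b) c - dia a (dia b c) = dia (dia b a) c - dia b (dia a c) := by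
  have hsingle : ∀ (x : Bool × ℤ) (r : k), Finsupp.single x r = r • Finsupp.single x (1 : k) := by
    intro x r; rw [Finsupp.smul_single', mul_one]
  -- key case: all three arguments are basis vectors
  have key : ∀ x y z : Bool × ℤ,
      dia (dia (Finsupp.single x (1:k)) (Finsupp.single y 1)) (Finsupp.single z 1)
        - dia (Finsupp.single x 1) (dia (Finsupp.single y 1) (Finsupp.single z 1))
        - (dia (dia (Finsupp.single y 1) (Finsupp.single x 1)) (Finsupp.single z 1)
        - dia (Finsupp.single y 1) (dia (Finsupp.single x 1) (Finsupp.single z 1))) = 0 := by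
    rintro ⟨bx, i⟩ ⟨by', j⟩ ⟨bz, l⟩
    cases bx <;> cases by' <;> cases bz <;>
      simp only [htt, hts, hst, hss, map_zsmul, LinearMap.smul_apply, smul_smul, map_zero,
        LinearMap.zero_apply, smul_zero, zero_sub, sub_zero, sub_self, neg_zero] <;>
      ring_nf <;> module
  -- extend to general c
  have key2 : ∀ (x y : Bool × ℤ) (c : (Bool × ℤ) →₀ k),
      dia (dia (Finsupp.single x (1:k)) (Finsupp.single y 1)) c
        - dia (Finsupp.single x 1) (dia (Finsupp.single y 1) c)
        - (dia (dia (Finsupp.single y 1) (Finsupp.single x 1)) c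
        - dia (Finsupp.single y 1) (dia (Finsupp.single x 1) c)) = 0 := by
    intro x y c
    induction c using Finsupp.induction_linear with
    | zero => simp
    | add f g hf hg =>
      simp only [map_add]
      have h := congrArg₂ (· + ·) hf hg
      simp only [add_zero] at h
      rw [← h]; abel
    | single z r =>
      rw [hsingle z r]
      simp only [map_smul, ← smul_sub, key x y z, smul_zero]
  -- extend to general b
  have key3 : ∀ (x : Bool × ℤ) (b c : (Bool × ℤ) →₀ k),
      dia (dia (Finsupp.single x (1:k)) b) c
        - dia (Finsupp.single x 1) (dia b c)
        - (dia (dia b (Finsupp.single x 1)) c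
        - dia b (dia (Finsupp.single x 1) c)) = 0 := by
    intro x b c
    induction b using Finsupp.induction_linear with
    | zero => simp
    | add f g hf hg =>
      simp only [map_add, LinearMap.add_apply]
      have h := congrArg₂ (· + ·) hf hg
      simp only [add_zero] at h
      rw [← h]; abel
    | single y r =>
      rw [hsingle y r]
      simp only [map_smul, LinearMap.smul_apply, ← smul_sub, key2 x y c, smul_zero]
  intro a b c
  rw [← sub_eq_zero]
  have main : dia (dia a b) c - dia a (dia b c) - (dia (dia b a) c - dia b (dia a c)) = 0 := by
    induction a using Finsupp.induction_linear with
    | zero => simp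
    | add f g hf hg =>
      simp only [map_add, LinearMap.add_apply]
      have h := congrArg₂ (· + ·) hf hg
      simp only [add_zero] at h
      rw [← h]; abel
    | single x r =>
      rw [hsingle x r]
      simp only [map_smul, LinearMap.smul_apply, ← smul_sub, key3 x b c, smul_zero]
  exact main
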